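/- Let (a,b) be a fictitious-play trajectory. Then for every T ≥ 5, the players' combined total payoff satisfies T − √(10T) ≤ Σ_{t=1}^T (u_A^t + u_B^t) ≤ T + √(10T). -/
import Mathlib


open MeasureTheory

/-- Bob's choice of the left or right piece. -/
inductive Choice
  | L
  | R
deriving DecidableEq

/-- The cumulative valuation `V(x) = ∫_0^x v`. -/
noncomputable def cumul (v : ℝ → ℝ) (x : ℝ) : ℝ := ∫ y in (0:ℝ)..x, v y

/-- `v` is an integrable value density on `[0,1]`, bounded between `lo` and `hi`,
integrating to `1`. -/
def IsDensity (lo hi : ℝ) (v : ℝ → ℝ) : Prop :=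
  IntervalIntegrable v volume 0 1 ∧
  (∀ x ∈ Set.Icc (0:ℝ) 1, lo ≤ v x ∧ v x ≤ hi) ∧
  (∫ y in (0:ℝ)..1, v y) = 1

/-- Alice's round-`t` utility: if Bob picks `L` she gets `[a_t,1]`, else `[0,a_t]`. -/
noncomputable def uA (vA : ℝ → ℝ) (a : ℕ → ℝ) (b : ℕ → Choice) (t : ℕ) : ℝ :=
  if b t = Choice.L then 1 - cumul vA (a t) else cumul vA (a t)

/-- Bob's round-`t` utility: if he picks `L` he gets `[0,a_t]`, else `[a_t,1]`. -/
noncomputable def uB (vB : ℝ → ℝ) (a : ℕ → ℝ) (b : ℕ → Choice) (t : ℕ) : ℝ :=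
  if b t = Choice.L then cumul vB (a t) else 1 - cumul vB (a t)

/-- `α_t = r_t − ℓ_t`: number of `R` choices minus number of `L` choices up to round `t`. -/
noncomputable def alphaFP (b : ℕ → Choice) (t : ℕ) : ℝ :=
  ∑ i ∈ Finset.Icc 1 t, (if b i = Choice.R then (1:ℝ) else -1)

/-- `β_t = Σ_{i=1}^t (2 V_B(a_i) − 1)`. -/
noncomputable def betaFP (vB : ℝ → ℝ) (a : ℕ → ℝ) (t : ℕ) : ℝ :=
  ∑ i ∈ Finset.Icc 1 t, (2 * cumul vB (a i) - 1)

/-- The radius `ρ_t = |α_t| + |β_t|`. -/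
noncomputable def rhoFP (vB : ℝ → ℝ) (a : ℕ → ℝ) (b : ℕ → Choice) (t : ℕ) : ℝ :=
  |alphaFP b t| + |betaFP vB a t|

/-- `(a,b)` is a fictitious-play trajectory. -/
def IsFictitiousPlay (vB : ℝ → ℝ) (a : ℕ → ℝ) (b : ℕ → Choice) : Prop :=
  ∀ t : ℕ,
    (0 < alphaFP b t → a (t+1) = 1) ∧
    (alphaFP b t < 0 → a (t+1) = 0) ∧
    (0 < betaFP vB a t → b (t+1) = Choice.L) ∧
    (betaFP vB a t < 0 → b (t+1) = Choice.R)

/-- Round `t` is axis-crossing. -/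
def AxisCrossing (vB : ℝ → ℝ) (a : ℕ → ℝ) (b : ℕ → Choice) (t : ℕ) : Prop :=
  alphaFP b t = 0 ∨
  (betaFP vB a t ≤ 0 ∧ 0 < betaFP vB a (t+1)) ∨
  (0 ≤ betaFP vB a t ∧ betaFP vB a (t+1) < 0)

namespace FPaux

/-- Integer-valued version of `alphaFP`. -/
def iA (b : ℕ → Choice) (t : ℕ) : ℤ := ∑ i ∈ Finset.Icc 1 t, (if b i = Choice.R then 1 else -1)

lemma iA_zero (b : ℕ → Choice) : iA b 0 = 0 := by simp [iA]

lemma iA_cast (b : ℕ → Choice) (t : ℕ) : ((iA b t : ℤ) : ℝ) = alphaFP b t := by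
  unfold iA alphaFP
  push_cast
  refine Finset.sum_congr rfl fun i _ => by split <;> simp

lemma iA_succ (b : ℕ → Choice) (t : ℕ) :
    iA b (t+1) = iA b t + (if b (t+1) = Choice.R then 1 else -1) :=
  Finset.sum_Icc_succ_top (by omega) _

lemma beta_succ (vB : ℝ → ℝ) (a : ℕ → ℝ) (t : ℕ) :
    betaFP vB a (t+1) = betaFP vB a t + (2 * cumul vB (a (t+1)) - 1) :=
  Finset.sum_Icc_succ_top (by omega) _

section Density

variable {δ Δ : ℝ} {v : ℝ → ℝ}

lemma cumul_zero (v : ℝ → ℝ) : cumul v 0 = 0 := by simp [cumul]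

lemma cumul_one (hv : IsDensity δ Δ v) : cumul v 1 = 1 := hv.2.2

lemma intble (hv : IsDensity δ Δ v) {x y : ℝ} (hx : x ∈ Set.Icc (0:ℝ) 1)
    (hy : y ∈ Set.Icc (0:ℝ) 1) : IntervalIntegrable v volume x y := by
  refine hv.1.mono_set (Set.uIcc_subset_uIcc ?_ ?_) <;>
    rw [Set.uIcc_of_le (zero_le_one (α := ℝ))] <;> assumption

lemma cumul_lb (hv : IsDensity δ Δ v) {x : ℝ} (hx : x ∈ Set.Icc (0:ℝ) 1) :
    δ * x ≤ cumul v x := by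
  have h1 : IntervalIntegrable v volume 0 x :=
    intble hv ⟨le_refl 0, zero_le_one⟩ hx
  have hc : IntervalIntegrable (fun _ => δ) volume 0 x := intervalIntegrable_const
  have h2 := intervalIntegral.integral_mono_on hx.1 hc h1
    (fun y hy => (hv.2.1 y ⟨hy.1, hy.2.trans hx.2⟩).1)
  simpa [cumul, mul_comm] using h2

lemma cumul_ub (hv : IsDensity δ Δ v) {x : ℝ} (hx : x ∈ Set.Icc (0:ℝ) 1) :
    cumul v x ≤ 1 - δ * (1 - x) := by
  have h1 : IntervalIntegrable v volume 0 x :=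
    intble hv ⟨le_refl 0, zero_le_one⟩ hx
  have h2 : IntervalIntegrable v volume x 1 :=
    intble hv hx ⟨zero_le_one, le_refl 1⟩
  have hadd : cumul v x + ∫ y in x..(1:ℝ), v y = 1 := by
    rw [cumul, intervalIntegral.integral_add_adjacent_intervals h1 h2]
    exact hv.2.2
  have hc : IntervalIntegrable (fun _ => δ) volume x 1 := intervalIntegrable_const
  have h3 := intervalIntegral.integral_mono_on hx.2 hc h2
    (fun y hy => (hv.2.1 y ⟨hx.1.trans hy.1, hy.2⟩).1)
  rw [intervalIntegral.integral_const, smul_eq_mul] at h3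
  nlinarith [h3, hadd]

lemma cumul_mem (hδ : 0 < δ) (hv : IsDensity δ Δ v) {x : ℝ} (hx : x ∈ Set.Icc (0:ℝ) 1) :
    cumul v x ∈ Set.Icc (0:ℝ) 1 := by
  have h1 := cumul_lb hv hx
  have h2 := cumul_ub hv hx
  constructor
  · nlinarith [hx.1, hδ.le]
  · nlinarith [hx.2, hδ.le]

lemma cumul_pos (hδ : 0 < δ) (hv : IsDensity δ Δ v) {x : ℝ}
    (hx : x ∈ Set.Icc (0:ℝ) 1) (h0 : x ≠ 0) : 0 < cumul v x := by
  have h1 := cumul_lb hv hx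
  have : 0 < x := lt_of_le_of_ne hx.1 (Ne.symm h0)
  nlinarith

lemma cumul_lt_one (hδ : 0 < δ) (hv : IsDensity δ Δ v) {x : ℝ}
    (hx : x ∈ Set.Icc (0:ℝ) 1) (h1 : x ≠ 1) : cumul v x < 1 := by
  have h2 := cumul_ub hv hx
  have : x < 1 := lt_of_le_of_ne hx.2 h1
  nlinarith

end Density

end FPaux

namespace FPaux

section Steps

variable {δ Δ : ℝ} {vA vB : ℝ → ℝ} {a : ℕ → ℝ} {b : ℕ → Choice}

/-- Per-round excess payoff. -/
noncomputable def E (vA vB : ℝ → ℝ) (a : ℕ → ℝ) (b : ℕ → Choice) (t : ℕ) : ℝ :=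
  uA vA a b t + uB vB a b t - 1

lemma E_eq (t : ℕ) : E vA vB a b t =
    if b t = Choice.L then cumul vB (a t) - cumul vA (a t)
    else cumul vA (a t) - cumul vB (a t) := by
  unfold E uA uB
  split <;> ring

lemma abs_E_le_one (hδ : 0 < δ) (hA : IsDensity δ Δ vA) (hB : IsDensity δ Δ vB)
    (ha : ∀ t : ℕ, 1 ≤ t → a t ∈ Set.Icc (0:ℝ) 1) (t : ℕ) (ht : 1 ≤ t) :
    |E vA vB a b t| ≤ 1 := by
  have h1 := cumul_mem hδ hA (ha t ht)
  have h2 := cumul_mem hδ hB (ha t ht)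
  rw [E_eq, abs_le]
  constructor <;> [skip; skip] <;> split <;>
    simp only [Set.mem_Icc] at h1 h2 <;> linarith [h1.1, h1.2, h2.1, h2.2]

lemma abs_dB_le_one (hδ : 0 < δ) (hB : IsDensity δ Δ vB)
    (ha : ∀ t : ℕ, 1 ≤ t → a t ∈ Set.Icc (0:ℝ) 1) (t : ℕ) :
    |betaFP vB a (t+1) - betaFP vB a t| ≤ 1 := by
  have h2 := cumul_mem hδ hB (ha (t+1) (by omega))
  simp only [Set.mem_Icc] at h2
  rw [beta_succ, abs_le]
  constructor <;> linarith [h2.1, h2.2]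

/-- Forced move of Alice when `α ≠ 0`. -/
lemma forced_step (hA : IsDensity δ Δ vA) (hB : IsDensity δ Δ vB)
    (hfp : IsFictitiousPlay vB a b) {t : ℕ} (ht : iA b t ≠ 0) :
    E vA vB a b (t+1) = 0 ∧
    betaFP vB a (t+1) - betaFP vB a t = (if 0 < iA b t then 1 else -1) := by
  rcases lt_or_gt_of_ne ht with hneg | hpos
  · have hα : alphaFP b t < 0 := by
      rw [← iA_cast]; exact_mod_cast hneg
    have ha0 : a (t+1) = 0 := (hfp t).2.1 hα
    refine ⟨?_, ?_⟩
    · rw [E_eq, ha0, cumul_zero, cumul_zero]; split <;> ring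
    · rw [beta_succ, ha0, cumul_zero, if_neg (by omega)]; ring
  · have hα : 0 < alphaFP b t := by
      rw [← iA_cast]; exact_mod_cast hpos
    have ha1 : a (t+1) = 1 := (hfp t).1 hα
    refine ⟨?_, ?_⟩
    · rw [E_eq, ha1, cumul_one hA, cumul_one hB]; split <;> ring
    · rw [beta_succ, ha1, cumul_one hB, if_pos (by omega)]; ring

/-- Forced move of Bob when `β ≠ 0`. -/
lemma bob_pos (hfp : IsFictitiousPlay vB a b) {t : ℕ} (ht : 0 < betaFP vB a t) :
    iA b (t+1) = iA b t - 1 := by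
  have hb := (hfp t).2.2.1 ht
  rw [iA_succ, hb]
  simp only [reduceCtorEq, if_false]
  ring

lemma bob_neg (hfp : IsFictitiousPlay vB a b) {t : ℕ} (ht : betaFP vB a t < 0) :
    iA b (t+1) = iA b t + 1 := by
  have hb := (hfp t).2.2.2 ht
  rw [iA_succ, hb]
  simp

/-- The `±1` step structure of `iA`. -/
lemma iA_step (b : ℕ → Choice) (t : ℕ) :
    iA b (t+1) = iA b t + 1 ∨ iA b (t+1) = iA b t - 1 := by
  rw [iA_succ]
  split
  · left; ring
  · right; ring

/-- Scoring implies the product `σ·Δβ < 1`. -/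
lemma score_step (hδ : 0 < δ) (hA : IsDensity δ Δ vA) (hB : IsDensity δ Δ vB)
    (ha : ∀ t : ℕ, 1 ≤ t → a t ∈ Set.Icc (0:ℝ) 1) {t : ℕ}
    (hE : E vA vB a b (t+1) ≠ 0) :
    ((iA b (t+1) - iA b t : ℤ) : ℝ) * (betaFP vB a (t+1) - betaFP vB a t) < 1 := by
  have hp := ha (t+1) (by omega)
  have hΔB : betaFP vB a (t+1) - betaFP vB a t = 2 * cumul vB (a (t+1)) - 1 := by
    rw [beta_succ]; ring
  have hΔA : iA b (t+1) - iA b t = (if b (t+1) = Choice.R then 1 else -1) := by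
    rw [iA_succ]; ring
  rw [E_eq] at hE
  by_cases hL : b (t+1) = Choice.L
  · have hR : b (t+1) ≠ Choice.R := by simp [hL]
    rw [if_pos hL] at hE
    have hne : a (t+1) ≠ 0 := by
      intro h0
      rw [h0, cumul_zero, cumul_zero] at hE
      exact hE (by ring)
    have hpos : 0 < cumul vB (a (t+1)) := cumul_pos hδ hB hp hne
    rw [hΔA, hΔB, if_neg hR]
    push_cast
    nlinarith
  · rw [if_neg hL] at hE
    have hR : b (t+1) = Choice.R := by
      cases h : b (t+1) <;> simp_all
    have hne : a (t+1) ≠ 1 := by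
      intro h0
      rw [h0, cumul_one hA, cumul_one hB] at hE
      exact hE (by ring)
    have hlt : cumul vB (a (t+1)) < 1 := cumul_lt_one hδ hB hp hne
    rw [hΔA, hΔB, if_pos hR]
    push_cast
    nlinarith

/-- Walk speed bound. -/
lemma walk (b : ℕ → Choice) {m n : ℕ} (h : m ≤ n) :
    |iA b n - iA b m| ≤ (n : ℤ) - m := by
  induction n, h using Nat.le_induction with
  | base => simp
  | succ n hmn ih =>
    have hs := iA_step b n
    have h1 : |iA b (n+1) - iA b n| ≤ 1 := by
      rcases hs with h | h <;> rw [h] <;> simp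
    calc |iA b (n+1) - iA b m| ≤ |iA b (n+1) - iA b n| + |iA b n - iA b m| := by
          have := abs_add_le (iA b (n+1) - iA b n) (iA b n - iA b m)
          simpa using this
      _ ≤ 1 + ((n:ℤ) - m) := by linarith
      _ ≤ (↑(n+1):ℤ) - m := by push_cast; linarith

/-- Parity of the walk. -/
lemma walk_parity (b : ℕ → Choice) {m n : ℕ} (h : m ≤ n) :
    Even (iA b n - iA b m + n - m) := by
  induction n, h using Nat.le_induction with
  | base => simp
  | succ n hmn ih =>
    have hs := iA_step b n
    have : iA b (n+1) - iA b m + (↑(n+1):ℤ) - m =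
        (iA b n - iA b m + n - m) + (iA b (n+1) - iA b n + 1) := by push_cast; ring
    rw [this]
    refine ih.add ?_
    rcases hs with h | h <;> rw [h]
    · exact ⟨iA b n - iA b m + 1 - (iA b n - iA b m + 1) + 1, by ring⟩
    · exact ⟨0, by ring⟩

end Steps

end FPaux

namespace FPaux

section Excursion

variable {δ Δ : ℝ} {vA vB : ℝ → ℝ} {a : ℕ → ℝ} {b : ℕ → Choice}

/-- Full analysis of one excursion of `α` between consecutive zeros. -/
lemma excursion (hδ : 0 < δ) (hA : IsDensity δ Δ vA) (hB : IsDensity δ Δ vB)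
    (ha : ∀ t : ℕ, 1 ≤ t → a t ∈ Set.Icc (0:ℝ) 1) (hfp : IsFictitiousPlay vB a b)
    {z z' : ℕ} (hzz : z < z') (h0 : iA b z = 0) (h0' : iA b z' = 0)
    (hmid : ∀ t, z < t → t < z' → iA b t ≠ 0) (σ : ℤ) (hσ : σ = iA b (z+1)) :
    0 ≤ -(σ:ℝ) * betaFP vB a z ∧
    2 ∣ (z' - z) ∧
    (σ:ℝ) * betaFP vB a z' =
      ((z' - z : ℕ) : ℝ) - 1 - (-(σ:ℝ) * betaFP vB a z)
        - (-(σ:ℝ) * (betaFP vB a (z+1) - betaFP vB a z)) ∧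
    2 + 2 * ((-(σ:ℝ) * betaFP vB a z) + (-(σ:ℝ) * (betaFP vB a (z+1) - betaFP vB a z)))
      ≤ ((z' - z : ℕ) : ℝ) := by
  have hσpm : σ = 1 ∨ σ = -1 := by
    rcases iA_step b z with h | h <;> rw [hσ, h, h0] <;> [left; right] <;> ring
  have hσne : σ ≠ 0 := by rcases hσpm with h | h <;> omega
  have hσsq : (σ:ℝ) * (σ:ℝ) = 1 := by rcases hσpm with h | h <;> rw [h] <;> norm_num
  have hz1 : z + 1 < z' := by
    have h1 : z + 1 ≤ z' := hzz
    have h2 : z + 1 ≠ z' := fun h => hσne (by rw [hσ, h, h0'])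
    omega
  -- the sign of `α` is constant `σ` within the excursion
  have hsign : ∀ t, z + 1 ≤ t → t < z' → 1 ≤ σ * iA b t := by
    intro t h1
    induction t, h1 using Nat.le_induction with
    | base =>
      intro _
      rcases hσpm with h | h <;> rw [h, ← hσ] <;> rw [h] <;> norm_num
    | succ n hn ih =>
      intro h2
      have h3 := ih (by omega)
      have h4 : iA b (n+1) ≠ 0 := hmid _ (by omega) h2
      rcases iA_step b n with h | h <;> rcases hσpm with hs | hs <;>
        rw [hs] at h3 ⊢ <;> rw [h] <;> omega
  -- β is linear within the excursion
  have hBlin : ∀ t, z + 1 ≤ t → t ≤ z' →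
      betaFP vB a t = betaFP vB a (z+1) + (σ:ℝ) * ((t:ℝ) - ((z:ℕ):ℝ) - 1) := by
    intro t h1
    induction t, h1 using Nat.le_induction with
    | base => intro _; push_cast; ring
    | succ n hn ih =>
      intro h2
      have hBn := ih (by omega)
      have hAn : iA b n ≠ 0 := hmid _ (by omega) (by omega)
      have hstep := (forced_step hA hB hfp hAn).2
      have hsn := hsign n hn (by omega)
      have hΔ : betaFP vB a (n+1) - betaFP vB a n = (σ:ℝ) := by
        rcases hσpm with hs | hs <;> rw [hs] at hsn ⊢
        · rw [hstep, if_pos (by omega)]; norm_num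
        · rw [hstep, if_neg (by omega)]; norm_num
      have : betaFP vB a (n+1) = betaFP vB a n + (σ:ℝ) := by linarith
      rw [this, hBn]
      push_cast
      ring
  -- u ≥ 0
  have hu : 0 ≤ -(σ:ℝ) * betaFP vB a z := by
    rcases lt_trichotomy (betaFP vB a z) 0 with h | h | h
    · have hb := bob_neg hfp h
      have : σ = 1 := by rw [hσ, hb, h0]; ring
      rw [this]; push_cast; nlinarith
    · rw [h]; ring_nf; exact le_refl 0
    · have hb := bob_pos hfp h
      have : σ = -1 := by rw [hσ, hb, h0]; ring
      rw [this]; push_cast; nlinarith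
  refine ⟨hu, ?_, ?_, ?_⟩
  -- parity
  · have hpar := walk_parity b hzz.le
    rw [h0, h0'] at hpar
    obtain ⟨k, hk⟩ := hpar
    omega
  -- the end-value identity
  · have hend := hBlin z' (by omega) (le_refl z')
    rw [hend]
    have hc : ((z' - z : ℕ) : ℝ) = ((z':ℕ):ℝ) - ((z:ℕ):ℝ) := by
      push_cast [Nat.cast_sub hzz.le]; ring
    rw [hc]
    linear_combination (((z':ℕ):ℝ) - ((z:ℕ):ℝ) - 1) * hσsq
  -- the length lower bound
  · set u : ℝ := -(σ:ℝ) * betaFP vB a z with hu_def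
    set y : ℝ := -(σ:ℝ) * (betaFP vB a (z+1) - betaFP vB a z) with hy_def
    by_cases hc : u + y ≤ 0
    · have h2 : (2:ℝ) ≤ ((z' - z : ℕ) : ℝ) := by
        have : (2:ℕ) ≤ z' - z := by omega
        exact_mod_cast this
      linarith
    · push_neg at hc
      set j₀ : ℕ := ⌈u + y⌉₊ with hj₀
      have hclimb : ∀ j : ℕ, (j:ℝ) < u + y + 1 →
          σ * iA b (z+1+j) = 1 + j ∧ z+1+j < z' := by
        intro j
        induction j with
        | zero =>
          intro _
          constructor
          · rcases hσpm with h | h <;> rw [← hσ, h] <;> norm_num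
          · omega
        | succ j ih =>
          intro hj
          have hj' : (j:ℝ) < u + y + 1 := by push_cast at hj; linarith
          obtain ⟨hAj, hlt⟩ := ih hj'
          have hBj := hBlin (z+1+j) (by omega) hlt.le
          have hbval : -(σ:ℝ) * betaFP vB a (z+1+j) = u + y - j := by
            rw [hBj, hu_def, hy_def]
            push_cast
            linear_combination (-(j:ℝ)) * hσsq
          have hbp : (0:ℝ) < u + y - j := by push_cast at hj; linarith
          have hAne : σ * iA b (z+1+(j+1)) = 1 + (j+1) := by
            rcases hσpm with hs | hs
            · have hBneg : betaFP vB a (z+1+j) < 0 := by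
                rw [hs] at hbval; push_cast at hbval; linarith
              have hstep := bob_neg hfp hBneg
              rw [hs] at hAj ⊢
              have : z + 1 + (j + 1) = (z + 1 + j) + 1 := by omega
              rw [this, hstep]
              omega
            · have hBpos : 0 < betaFP vB a (z+1+j) := by
                rw [hs] at hbval; push_cast at hbval; linarith
              have hstep := bob_pos hfp hBpos
              rw [hs] at hAj ⊢
              have : z + 1 + (j + 1) = (z + 1 + j) + 1 := by omega
              rw [this, hstep]
              omega
          refine ⟨hAne, ?_⟩
          have hne : iA b (z+1+(j+1)) ≠ 0 := by
            intro h
            rw [h, mul_zero] at hAne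
            omega
          have : z+1+(j+1) ≠ z' := fun h => hne (h ▸ h0')
          omega
      have hj0lt : (j₀:ℝ) < u + y + 1 := by
        have := Nat.ceil_lt_add_one hc.le
        simpa [hj₀] using this
      obtain ⟨hAj0, hlt0⟩ := hclimb j₀ hj0lt
      have hwalk := walk b (show z+1+j₀ ≤ z' from hlt0.le)
      rw [h0'] at hwalk
      have habs : |iA b (z+1+j₀)| = 1 + (j₀:ℤ) := by
        rcases hσpm with hs | hs <;> rw [hs] at hAj0
        · rw [one_mul] at hAj0; rw [hAj0]; rw [abs_of_nonneg (by omega)]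
        · have : iA b (z+1+j₀) = -(1 + j₀) := by omega
          rw [this, abs_neg, abs_of_nonneg (by omega)]
      rw [abs_sub_comm, sub_zero] at hwalk
      rw [habs] at hwalk
      have hlen : z + 2 + 2 * j₀ ≤ z' := by omega
      have hle : ((z + 2 + 2*j₀ : ℕ):ℝ) ≤ ((z':ℕ):ℝ) := by exact_mod_cast Nat.cast_le.mpr hlen
      have hceil : u + y ≤ (j₀:ℝ) := Nat.le_ceil _
      have hc2 : ((z' - z : ℕ) : ℝ) = ((z':ℕ):ℝ) - ((z:ℕ):ℝ) := by
        push_cast [Nat.cast_sub hzz.le]; ring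
      rw [hc2]
      push_cast at hle
      linarith

end Excursion

end FPaux

namespace FPaux

section Main

variable {δ Δ : ℝ} {vA vB : ℝ → ℝ} {a : ℕ → ℝ} {b : ℕ → Choice}

lemma sigma_pm {z : ℕ} (h0 : iA b z = 0) : iA b (z+1) = 1 ∨ iA b (z+1) = -1 := by
  rcases iA_step b z with h | h <;> rw [h, h0] <;> [left; right] <;> ring

/-- The main invariant, at every zero of `α`. -/
lemma invariant (hδ : 0 < δ) (hA : IsDensity δ Δ vA) (hB : IsDensity δ Δ vB)
    (ha : ∀ t : ℕ, 1 ≤ t → a t ∈ Set.Icc (0:ℝ) 1) (hfp : IsFictitiousPlay vB a b) :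
    ∀ z : ℕ, iA b z = 0 →
      ∃ M h : ℕ, |∑ t ∈ Finset.Icc 1 z, E vA vB a b t| ≤ 2 + M ∧ M ≤ h ∧
        (h:ℝ) ≤ |betaFP vB a z| ∧ M * (M+1) ≤ z := by
  intro z
  induction z using Nat.strong_induction_on with
  | _ z ih =>
    intro hz0
    rcases Nat.eq_zero_or_pos z with hz | hzpos
    · subst hz
      refine ⟨0, 0, ?_, le_refl 0, ?_, by omega⟩
      · simp
      · simp [betaFP]
    -- find the previous zero
    · set z₀ := Nat.findGreatest (fun t => iA b t = 0) (z-1) with hz₀def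
      have hz₀0 : iA b z₀ = 0 :=
        Nat.findGreatest_spec (P := fun t => iA b t = 0) (Nat.zero_le (z-1)) (iA_zero b)
      have hz₀le : z₀ ≤ z - 1 := Nat.findGreatest_le (z-1)
      have hz₀lt : z₀ < z := by omega
      have hmid : ∀ t, z₀ < t → t < z → iA b t ≠ 0 := fun t h1 h2 =>
        Nat.findGreatest_is_greatest (P := fun t => iA b t = 0) h1 (by omega)
      obtain ⟨M, h, hP, hMh, hhB, hMz⟩ := ih z₀ hz₀lt hz₀0
      obtain ⟨hu0, hdvd, hC2, hC3⟩ :=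
        excursion hδ hA hB ha hfp hz₀lt hz₀0 hz0 hmid (iA b (z₀+1)) rfl
      set σ : ℤ := iA b (z₀+1) with hσdef
      set u : ℝ := -(σ:ℝ) * betaFP vB a z₀ with hu_def
      set y : ℝ := -(σ:ℝ) * (betaFP vB a (z₀+1) - betaFP vB a z₀) with hy_def
      set g : ℕ := z - z₀ with hg_def
      have hσpm : σ = 1 ∨ σ = -1 := sigma_pm hz₀0
      have habsσ : |(σ:ℝ)| = 1 := by rcases hσpm with hs | hs <;> rw [hs] <;> norm_num
      -- u is |β z₀|
      have habsu : u = |betaFP vB a z₀| := by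
        have : |u| = |betaFP vB a z₀| := by
          rw [hu_def, abs_mul, abs_neg, habsσ, one_mul]
        rw [← this, abs_of_nonneg hu0]
      -- |y| ≤ 1
      have hy1 : |y| ≤ 1 := by
        rw [hy_def, abs_mul, abs_neg, habsσ, one_mul]
        exact abs_dB_le_one hδ hB ha z₀
      have hyge : -1 ≤ y := by
        have := abs_le.mp hy1; exact this.1
      -- h ≤ u
      have hhu : (h:ℝ) ≤ u := by rw [habsu]; exact hhB
      -- half-length
      have hg2 : g = 2 * (g / 2) := by omega
      have hghalf : ((g/2 : ℕ):ℝ) = (g:ℝ)/2 := by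
        obtain ⟨k, hk⟩ := hdvd
        rw [hk, Nat.mul_div_cancel_left k (by norm_num)]
        push_cast; ring
      -- |β z| value
      have hBz : (σ:ℝ) * betaFP vB a z = (g:ℝ) - 1 - u - y := hC2
      have hgge2 : (2:ℝ) ≤ (g:ℕ) := by
        have : (2:ℕ) ≤ g := by omega
        exact_mod_cast this
      have hBzpos : 0 < (σ:ℝ) * betaFP vB a z := by
        rw [hBz]; linarith [hC3, hgge2]
      have habsBz : |betaFP vB a z| = (g:ℝ) - 1 - u - y := by
        have h1 : |betaFP vB a z| = |(σ:ℝ) * betaFP vB a z| := by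
          rw [abs_mul, habsσ, one_mul]
        rw [h1, abs_of_pos hBzpos, hBz]
      have hBzge : ((g/2 : ℕ):ℝ) ≤ |betaFP vB a z| := by
        rw [habsBz, hghalf]; linarith [hC3]
      -- sum splitting
      have hsplit1 := Finset.sum_Ioc_consecutive (f := E vA vB a b)
        (Nat.zero_le z₀) hz₀lt.le
      have hsplit2 := Finset.sum_Ioc_consecutive (f := E vA vB a b)
        (Nat.le_succ z₀) (show z₀ + 1 ≤ z by omega)
      have hsingle : ∑ t ∈ Finset.Ioc z₀ (z₀+1), E vA vB a b t = E vA vB a b (z₀+1) := by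
        rw [Nat.Ioc_succ_singleton, Finset.sum_singleton]
      have hzero : ∑ t ∈ Finset.Ioc (z₀+1) z, E vA vB a b t = 0 := by
        refine Finset.sum_eq_zero fun t htmem => ?_
        rw [Finset.mem_Ioc] at htmem
        have ht1 : t - 1 + 1 = t := by omega
        rw [← ht1]
        exact (forced_step hA hB hfp (hmid (t-1) (by omega) (by omega))).1
      have hIcc : ∀ n : ℕ, Finset.Icc 1 n = Finset.Ioc 0 n := fun n => rfl
      have hsum : ∑ t ∈ Finset.Icc 1 z, E vA vB a b t =
          (∑ t ∈ Finset.Icc 1 z₀, E vA vB a b t) + E vA vB a b (z₀+1) := by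
        rw [hIcc, hIcc, ← hsplit1, ← hsplit2, hsingle, hzero, add_zero]
      by_cases hE0 : E vA vB a b (z₀+1) = 0
      · -- non-scoring excursion
        refine ⟨M, g/2, ?_, ?_, hBzge, by omega⟩
        · rw [hsum, hE0, add_zero]; exact hP
        · have h1 : (h:ℝ) ≤ ((g/2 : ℕ):ℝ) := by
            rw [hghalf]; linarith [hC3, hhu, hyge]
          have h2 : h ≤ g/2 := by exact_mod_cast h1
          omega
      · -- scoring excursion
        have hsc := score_step hδ hA hB ha hE0
        have hΔA : iA b (z₀+1) - iA b z₀ = σ := by rw [hz₀0, hσdef]; ring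
        rw [hΔA] at hsc
        have hygt : -1 < y := by
          rw [hy_def]; nlinarith [hsc]
        have hgM : (h:ℝ) < ((g/2 : ℕ):ℝ) := by
          rw [hghalf]; linarith [hC3, hhu]
        have hgM' : h + 1 ≤ g/2 := by
          have : h < g/2 := by exact_mod_cast hgM
          omega
        refine ⟨M+1, g/2, ?_, by omega, hBzge, ?_⟩
        · rw [hsum]
          have hEb := abs_E_le_one (b := b) hδ hA hB ha (z₀+1) (by omega)
          calc |(∑ t ∈ Finset.Icc 1 z₀, E vA vB a b t) + E vA vB a b (z₀+1)|
              ≤ |∑ t ∈ Finset.Icc 1 z₀, E vA vB a b t| + |E vA vB a b (z₀+1)| :=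
                abs_add_le _ _
            _ ≤ (2 + M) + 1 := add_le_add hP hEb
            _ = 2 + (M+1 : ℕ) := by push_cast; ring
        · have hgge : 2 * (M + 1) ≤ g := by omega
          calc (M+1) * (M+1+1) = M * (M+1) + 2 * (M+1) := by ring
            _ ≤ z₀ + g := by omega
            _ = z := by omega

end Main

end FPaux

open FPaux in
/-- Under fictitious play, for `T ≥ 5` the combined total payoff satisfies
`T − √(10T) ≤ Σ (u_A^t + u_B^t) ≤ T + √(10T)`. -/
theorem total_payoff_bounds
    (δ Δ : ℝ) (hδ : 0 < δ) (hδΔ : δ ≤ Δ)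
    (vA vB : ℝ → ℝ) (hA : IsDensity δ Δ vA) (hB : IsDensity δ Δ vB)
    (a : ℕ → ℝ) (b : ℕ → Choice)
    (ha : ∀ t : ℕ, 1 ≤ t → a t ∈ Set.Icc (0:ℝ) 1)
    (hfp : IsFictitiousPlay vB a b)
    (T : ℕ) (hT : 5 ≤ T) :
    (T : ℝ) - Real.sqrt (10 * T) ≤ ∑ t ∈ Finset.Icc 1 T, (uA vA a b t + uB vB a b t) ∧
    ∑ t ∈ Finset.Icc 1 T, (uA vA a b t + uB vB a b t) ≤ (T : ℝ) + Real.sqrt (10 * T) := by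
  set zs := Nat.findGreatest (fun t => iA b t = 0) T with hzsdef
  have hzs0 : iA b zs = 0 :=
    Nat.findGreatest_spec (P := fun t => iA b t = 0) (Nat.zero_le T) (iA_zero b)
  have hzsle : zs ≤ T := Nat.findGreatest_le T
  obtain ⟨M, h, hP, hMh, hhB, hMz⟩ := invariant hδ hA hB ha hfp zs hzs0
  -- bound the total excess
  have hST : |∑ t ∈ Finset.Icc 1 T, E vA vB a b t| ≤ 3 + M := by
    rcases eq_or_lt_of_le hzsle with heq | hlt
    · rw [← heq]
      calc |∑ t ∈ Finset.Icc 1 zs, E vA vB a b t| ≤ 2 + M := hP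
        _ ≤ 3 + M := by linarith
    · have hmax : ∀ t, zs < t → t ≤ T → iA b t ≠ 0 := fun t h1 h2 =>
        Nat.findGreatest_is_greatest (P := fun t => iA b t = 0) h1 h2
      have hsplit1 := Finset.sum_Ioc_consecutive (f := E vA vB a b)
        (Nat.zero_le zs) hzsle
      have hsplit2 := Finset.sum_Ioc_consecutive (f := E vA vB a b)
        (Nat.le_succ zs) (show zs + 1 ≤ T by omega)
      have hsingle : ∑ t ∈ Finset.Ioc zs (zs+1), E vA vB a b t = E vA vB a b (zs+1) := by
        rw [Nat.Ioc_succ_singleton, Finset.sum_singleton]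
      have hzero : ∑ t ∈ Finset.Ioc (zs+1) T, E vA vB a b t = 0 := by
        refine Finset.sum_eq_zero fun t htmem => ?_
        rw [Finset.mem_Ioc] at htmem
        have ht1 : t - 1 + 1 = t := by omega
        rw [← ht1]
        refine (forced_step hA hB hfp ?_).1
        exact hmax (t-1) (by omega) (by omega)
      have hIcc : ∀ n : ℕ, Finset.Icc 1 n = Finset.Ioc 0 n := fun n => rfl
      have hsum : ∑ t ∈ Finset.Icc 1 T, E vA vB a b t =
          (∑ t ∈ Finset.Icc 1 zs, E vA vB a b t) + E vA vB a b (zs+1) := by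
        rw [hIcc, hIcc, ← hsplit1, ← hsplit2, hsingle, hzero, add_zero]
      rw [hsum]
      have hEb := abs_E_le_one (b := b) hδ hA hB ha (zs+1) (by omega)
      calc |(∑ t ∈ Finset.Icc 1 zs, E vA vB a b t) + E vA vB a b (zs+1)|
          ≤ |∑ t ∈ Finset.Icc 1 zs, E vA vB a b t| + |E vA vB a b (zs+1)| := abs_add_le _ _
        _ ≤ (2 + M) + 1 := add_le_add hP hEb
        _ = 3 + M := by ring
  -- M ≤ √T
  have hMs : (M:ℝ) ≤ Real.sqrt T := by
    refine Real.le_sqrt_of_sq_le ?_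
    have h1 : M * M ≤ T := by
      calc M * M ≤ M * (M+1) := by nlinarith
        _ ≤ zs := hMz
        _ ≤ T := hzsle
    have h2 := (Nat.cast_le (α := ℝ)).mpr h1
    push_cast at h2
    nlinarith [h2]
  -- √(10T) ≥ 3 + √T
  have hTpos : (0:ℝ) ≤ (T:ℝ) := by positivity
  have h10 : 3 + Real.sqrt T ≤ Real.sqrt (10 * T) := by
    have h9 : Real.sqrt (9 * T) ≤ Real.sqrt (10*T) :=
      Real.sqrt_le_sqrt (by linarith)
    have h9' : Real.sqrt ((9:ℝ) * T) = 3 * Real.sqrt T := by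
      rw [show (9:ℝ) * T = 3^2 * T by ring, Real.sqrt_mul (by positivity),
        Real.sqrt_sq (by norm_num)]
    have hT5 : Real.sqrt 5 ≤ Real.sqrt T := by
      refine Real.sqrt_le_sqrt ?_
      exact_mod_cast hT
    have h52 : (2:ℝ) ≤ Real.sqrt 5 :=
      Real.le_sqrt_of_sq_le (by norm_num)
    nlinarith [h9, h9', hT5, h52, Real.sqrt_nonneg (T:ℝ)]
  -- rewrite the total payoff
  have hsum : ∑ t ∈ Finset.Icc 1 T, (uA vA a b t + uB vB a b t) =
      (T:ℝ) + ∑ t ∈ Finset.Icc 1 T, E vA vB a b t := by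
    have hcong : ∀ t ∈ Finset.Icc 1 T, uA vA a b t + uB vB a b t
        = E vA vB a b t + 1 := fun t _ => by unfold FPaux.E; ring
    rw [Finset.sum_congr rfl hcong, Finset.sum_add_distrib, Finset.sum_const,
      Nat.card_Icc]
    simp
    ring
  rw [hsum]
  obtain ⟨hlo, hhi⟩ := abs_le.mp hST
  constructor <;> linarith
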